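/- Let G be the cumulative distribution function of an absolutely continuous real random variable, and fix c with G(c) < 1. If G is log-concave on the set where G > 0, then the shifted function y ↦ G(y) - G(c) is log-concave on the set {y > c : G(y) > G(c)}. -/

import Mathlib

open MeasureTheory Real

private lemma key_ineq (A B C t s : ℝ) (hCA : C < A) (hCB : C < B) (hC : 0 ≤ C)
    (ht : 0 ≤ t) (hs : 0 ≤ s) (hts : t + s = 1) :
    (A - C) ^ t * (B - C) ^ s + C ≤ A ^ t * B ^ s := by
  have hA : 0 < A := lt_of_le_of_lt hC hCA
  have hB : 0 < B := lt_of_le_of_lt hC hCB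
  have hACnn : 0 ≤ A - C := by linarith
  have hBCnn : 0 ≤ B - C := by linarith
  have hP : 0 < A ^ t * B ^ s :=
    mul_pos (Real.rpow_pos_of_pos hA t) (Real.rpow_pos_of_pos hB s)
  have g1 : ((A - C) / A) ^ t * ((B - C) / B) ^ s ≤ t * ((A - C) / A) + s * ((B - C) / B) :=
    Real.geom_mean_le_arith_mean2_weighted ht hs (div_nonneg hACnn hA.le)
      (div_nonneg hBCnn hB.le) hts
  have g2 : (C / A) ^ t * (C / B) ^ s ≤ t * (C / A) + s * (C / B) :=
    Real.geom_mean_le_arith_mean2_weighted ht hs (div_nonneg hC hA.le)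
      (div_nonneg hC hB.le) hts
  have e1 : ((A - C) / A) ^ t = (A - C) ^ t / A ^ t := Real.div_rpow hACnn hA.le t
  have e2 : ((B - C) / B) ^ s = (B - C) ^ s / B ^ s := Real.div_rpow hBCnn hB.le s
  have e3 : (C / A) ^ t = C ^ t / A ^ t := Real.div_rpow hC hA.le t
  have e4 : (C / B) ^ s = C ^ s / B ^ s := Real.div_rpow hC hB.le s
  have e5 : C ^ t * C ^ s = C := by
    rw [← Real.rpow_add' hC (by rw [hts]; norm_num)]
    rw [hts, Real.rpow_one]
  have hAt : (0:ℝ) < A ^ t := Real.rpow_pos_of_pos hA t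
  have hBs : (0:ℝ) < B ^ s := Real.rpow_pos_of_pos hB s
  rw [e1, e2] at g1
  rw [e3, e4] at g2
  -- multiply g1 and g2 by A^t * B^s
  have m1 : (A - C) ^ t * (B - C) ^ s ≤ A ^ t * B ^ s * (t * ((A - C) / A) + s * ((B - C) / B)) := by
    have := mul_le_mul_of_nonneg_left g1 hP.le
    calc (A - C) ^ t * (B - C) ^ s
        = A ^ t * B ^ s * ((A - C) ^ t / A ^ t * ((B - C) ^ s / B ^ s)) := by
          field_simp
      _ ≤ _ := this
  have m2 : C ≤ A ^ t * B ^ s * (t * (C / A) + s * (C / B)) := by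
    have := mul_le_mul_of_nonneg_left g2 hP.le
    have e6 : A ^ t * B ^ s * (C ^ t / A ^ t * (C ^ s / B ^ s)) = C ^ t * C ^ s := by
      field_simp
    calc C = A ^ t * B ^ s * (C ^ t / A ^ t * (C ^ s / B ^ s)) := by rw [e6, e5]
      _ ≤ _ := this
  have hsum : A ^ t * B ^ s * (t * ((A - C) / A) + s * ((B - C) / B))
      + A ^ t * B ^ s * (t * (C / A) + s * (C / B)) = A ^ t * B ^ s := by
    field_simp
    linear_combination (A * B) * hts
  linarith

/-- If a cumulative distribution function `G` (increasing, continuous, with values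
in `[0,1]`) is log-concave on the set where `G > 0`, and `G c < 1`, then the
shifted function `y ↦ G y - G c` is log-concave on `{y | c < y ∧ G c < G y}`. -/
theorem shifted_cdf_logConcave
    (G : ℝ → ℝ)
    (hmono : Monotone G)
    (hcont : Continuous G)
    (hle : ∀ y, 0 ≤ G y ∧ G y ≤ 1)
    (c : ℝ) (hc : G c < 1)
    (hlc : ConcaveOn ℝ {y : ℝ | 0 < G y} (fun y => Real.log (G y))) :
    ConcaveOn ℝ {y : ℝ | c < y ∧ G c < G y} (fun y => Real.log (G y - G c)) := by
  have hGc0 : 0 ≤ G c := (hle c).1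
  constructor
  · -- convexity of the set
    intro x hx y hy a b ha hb hab
    obtain ⟨hcx, hGx⟩ := hx
    obtain ⟨hcy, hGy⟩ := hy
    have hmin : min x y ≤ a • x + b • y := by
      simp only [smul_eq_mul]
      have h3 : a * min x y + b * min x y = min x y := by rw [← add_mul, hab, one_mul]
      nlinarith [mul_nonneg ha (sub_nonneg.2 (min_le_left x y)),
        mul_nonneg hb (sub_nonneg.2 (min_le_right x y))]
    have hcmin : c < min x y := lt_min hcx hcy
    have hGmin : G c < G (min x y) := by
      rcases le_total x y with h | h
      · rwa [min_eq_left h]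
      · rwa [min_eq_right h]
    exact ⟨lt_of_lt_of_le hcmin hmin, lt_of_lt_of_le hGmin (hmono hmin)⟩
  · intro x hx y hy a b ha hb hab
    simp only [smul_eq_mul] at *
    set m := a * x + b * y with hm
    have hGx : 0 < G x := hGc0.trans_lt hx.2
    have hGy : 0 < G y := hGc0.trans_lt hy.2
    have hxmem : x ∈ {y : ℝ | 0 < G y} := hGx
    have hymem : y ∈ {y : ℝ | 0 < G y} := hGy
    have hGm : 0 < G m := hlc.1 hxmem hymem ha hb hab
    have hlog := hlc.2 hxmem hymem ha hb hab
    simp only [smul_eq_mul] at hlog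
    have hprod : 0 < G x ^ a * G y ^ b :=
      mul_pos (Real.rpow_pos_of_pos hGx a) (Real.rpow_pos_of_pos hGy b)
    have h1 : G x ^ a * G y ^ b ≤ G m := by
      have hlogprod : Real.log (G x ^ a * G y ^ b) = a * Real.log (G x) + b * Real.log (G y) := by
        rw [Real.log_mul (ne_of_gt (Real.rpow_pos_of_pos hGx a))
          (ne_of_gt (Real.rpow_pos_of_pos hGy b)), Real.log_rpow hGx, Real.log_rpow hGy]
      have := hlog
      rw [← hlogprod] at this
      exact (Real.log_le_log_iff hprod hGm).1 this
    have hkey := key_ineq (G x) (G y) (G c) a b hx.2 hy.2 hGc0 ha hb hab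
    have hxc : 0 < G x - G c := sub_pos.2 hx.2
    have hyc : 0 < G y - G c := sub_pos.2 hy.2
    have hrpos : 0 < (G x - G c) ^ a * (G y - G c) ^ b :=
      mul_pos (Real.rpow_pos_of_pos hxc a) (Real.rpow_pos_of_pos hyc b)
    have hfin : (G x - G c) ^ a * (G y - G c) ^ b ≤ G m - G c := by linarith
    have hlogfin : Real.log ((G x - G c) ^ a * (G y - G c) ^ b)
        = a * Real.log (G x - G c) + b * Real.log (G y - G c) := by
      rw [Real.log_mul (ne_of_gt (Real.rpow_pos_of_pos hxc a))
        (ne_of_gt (Real.rpow_pos_of_pos hyc b)), Real.log_rpow hxc, Real.log_rpow hyc]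
    rw [← hlogfin]
    exact (Real.log_le_log_iff hrpos (lt_of_lt_of_le hrpos hfin)).2 hfin
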